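/- Let n ≥ 1. In the complex Euclidean space with orthonormal standard basis {e_{(i,j)} : 0 ≤ i ≤ n, j = 0 or i < j ≤ n}, define for each 1 ≤ i ≤ n the vector v_i = (1/√n)(e_{(0,0)} + Σ_{j=i+1}^{n} e_{(i,j)} − Σ_{j=1}^{i−1} e_{(j,i)}). Then there exists a unitary operator U on this space such that U e_{(i,0)} = v_i for every 1 ≤ i ≤ n. -/

import Mathlib

/-- Valid basis indices: `(i,0)` for `0 ≤ i ≤ n` (this includes `(0,0)`), and
`(i,j)` for `1 ≤ i < j ≤ n`. -/
def ValidIdx (n : ℕ) (p : Fin (n + 1) × Fin (n + 1)) : Prop :=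
  p.2.val = 0 ∨ (1 ≤ p.1.val ∧ p.1.val < p.2.val)

instance (n : ℕ) : DecidablePred (ValidIdx n) := fun p => by
  unfold ValidIdx; infer_instance

/-- The index set of the orthonormal standard basis. -/
abbrev BIdx (n : ℕ) := {p : Fin (n + 1) × Fin (n + 1) // ValidIdx n p}

/-- The standard basis vector `e_{(a,b)}`. -/
noncomputable def e (n : ℕ) (a b : Fin (n + 1)) (h : ValidIdx n (a, b)) :
    EuclideanSpace ℂ (BIdx n) :=
  EuclideanSpace.single ⟨(a, b), h⟩ 1

/-- `v_i = (1/√n)(e_{(0,0)} + Σ_{j=i+1}^{n} e_{(i,j)} − Σ_{j=1}^{i−1} e_{(j,i)})`. -/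
noncomputable def v (n : ℕ) (i : Fin (n + 1)) (hi : 1 ≤ i.val) :
    EuclideanSpace ℂ (BIdx n) :=
  ((Real.sqrt n : ℂ))⁻¹ •
    (e n 0 0 (Or.inl rfl)
      + (∑ j : Fin (n + 1), if h : i.val < j.val then e n i j (Or.inr ⟨hi, h⟩) else 0)
      - (∑ j : Fin (n + 1), if h : 1 ≤ j.val ∧ j.val < i.val then e n j i (Or.inr h) else 0))

open Finset

noncomputable def Ax (n : ℕ) (i : Fin (n + 1)) (hi : 1 ≤ i.val) : EuclideanSpace ℂ (BIdx n) :=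
  ∑ j : Fin (n + 1), if h : i.val < j.val then e n i j (Or.inr ⟨hi, h⟩) else 0

noncomputable def Bx (n : ℕ) (i : Fin (n + 1)) : EuclideanSpace ℂ (BIdx n) :=
  ∑ j : Fin (n + 1), if h : 1 ≤ j.val ∧ j.val < i.val then e n j i (Or.inr h) else 0

lemma v_eq (n : ℕ) (i : Fin (n + 1)) (hi : 1 ≤ i.val) :
    v n i hi = ((Real.sqrt n : ℂ))⁻¹ • (e n 0 0 (Or.inl rfl) + Ax n i hi - Bx n i) := rfl

lemma inner_e (n : ℕ) (a b a' b' : Fin (n + 1)) (h : ValidIdx n (a, b))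
    (h' : ValidIdx n (a', b')) :
    (inner ℂ (e n a b h) (e n a' b' h') : ℂ) = if a = a' ∧ b = b' then 1 else 0 := by
  rw [e, e, EuclideanSpace.inner_single_left, EuclideanSpace.single_apply]
  simp [Subtype.ext_iff, Prod.ext_iff, eq_comm]

lemma inner_e_Ax (n : ℕ) (a b k : Fin (n + 1)) (h : ValidIdx n (a, b)) (hk : 1 ≤ k.val) :
    (inner ℂ (e n a b h) (Ax n k hk) : ℂ) = if a = k ∧ k.val < b.val then 1 else 0 := by
  rw [Ax, inner_sum]
  have key : ∀ j : Fin (n + 1),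
      (inner ℂ (e n a b h) (if h' : k.val < j.val then e n k j (Or.inr ⟨hk, h'⟩) else 0) : ℂ)
        = if j = b then (if a = k ∧ k.val < b.val then 1 else 0) else 0 := by
    intro j
    split
    · erw [inner_e]
      simp only [← Fin.val_eq_val]
      split_ifs <;> first | rfl | omega
    · simp only [inner_zero_right, ← Fin.val_eq_val]
      split_ifs <;> first | rfl | omega
  simp_rw [key]
  simp

lemma inner_e_Bx (n : ℕ) (a b k : Fin (n + 1)) (h : ValidIdx n (a, b)) :
    (inner ℂ (e n a b h) (Bx n k) : ℂ)
      = if b = k ∧ 1 ≤ a.val ∧ a.val < k.val then 1 else 0 := by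
  rw [Bx, inner_sum]
  have key : ∀ j : Fin (n + 1),
      (inner ℂ (e n a b h) (if h' : 1 ≤ j.val ∧ j.val < k.val then e n j k (Or.inr h') else 0) : ℂ)
        = if j = a then (if b = k ∧ 1 ≤ a.val ∧ a.val < k.val then 1 else 0) else 0 := by
    intro j
    split
    · erw [inner_e]
      simp only [← Fin.val_eq_val]
      split_ifs <;> first | rfl | omega
    · simp only [inner_zero_right, ← Fin.val_eq_val]
      split_ifs <;> first | rfl | omega
  simp_rw [key]
  simp

lemma count_gt (n : ℕ) (i : Fin (n + 1)) :
    (∑ j : Fin (n + 1), if i.val < j.val then (1 : ℂ) else 0) = ((n - i.val : ℕ) : ℂ) := by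
  rw [Fin.sum_univ_eq_sum_range (fun m => if i.val < m then (1 : ℂ) else 0)]
  rw [Finset.sum_boole]
  have hf : Finset.filter (fun m => i.val < m) (Finset.range (n + 1))
      = Finset.Ico (i.val + 1) (n + 1) := by
    ext m; simp; omega
  rw [hf, Nat.card_Ico]
  norm_cast
  omega

lemma count_lt (n : ℕ) (i : Fin (n + 1)) :
    (∑ j : Fin (n + 1), if 1 ≤ j.val ∧ j.val < i.val then (1 : ℂ) else 0)
      = ((i.val - 1 : ℕ) : ℂ) := by
  rw [Fin.sum_univ_eq_sum_range (fun m => if 1 ≤ m ∧ m < i.val then (1 : ℂ) else 0)]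
  rw [Finset.sum_boole]
  have hf : Finset.filter (fun m => 1 ≤ m ∧ m < i.val) (Finset.range (n + 1))
      = Finset.Ico 1 i.val := by
    ext m; simp; omega
  rw [hf, Nat.card_Ico]

lemma inner_Ax_Ax (n : ℕ) (i k : Fin (n + 1)) (hi : 1 ≤ i.val) (hk : 1 ≤ k.val) :
    (inner ℂ (Ax n i hi) (Ax n k hk) : ℂ) = if i = k then ((n - i.val : ℕ) : ℂ) else 0 := by
  rw [Ax, sum_inner]
  have key : ∀ j : Fin (n + 1),
      (inner ℂ (if h : i.val < j.val then e n i j (Or.inr ⟨hi, h⟩) else 0) (Ax n k hk) : ℂ)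
        = if i = k then (if i.val < j.val then 1 else 0) else 0 := by
    intro j
    split
    · erw [inner_e_Ax]
      simp only [← Fin.val_eq_val]
      split_ifs <;> first | rfl | omega
    · simp only [inner_zero_left, ← Fin.val_eq_val]
      split_ifs <;> first | rfl | omega
  rcases eq_or_ne i k with rfl | hik
  · simp_rw [key, if_true]
    rw [count_gt]
  · simp_rw [key, if_neg hik]
    try simp

lemma inner_Bx_Bx (n : ℕ) (i k : Fin (n + 1)) :
    (inner ℂ (Bx n i) (Bx n k) : ℂ) = if i = k then ((i.val - 1 : ℕ) : ℂ) else 0 := by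
  rw [Bx, sum_inner]
  have key : ∀ j : Fin (n + 1),
      (inner ℂ (if h : 1 ≤ j.val ∧ j.val < i.val then e n j i (Or.inr h) else 0) (Bx n k) : ℂ)
        = if i = k then (if 1 ≤ j.val ∧ j.val < i.val then 1 else 0) else 0 := by
    intro j
    split
    · erw [inner_e_Bx]
      simp only [← Fin.val_eq_val]
      split_ifs <;> first | rfl | omega
    · simp only [inner_zero_left, ← Fin.val_eq_val]
      split_ifs <;> first | rfl | omega
  rcases eq_or_ne i k with rfl | hik
  · simp_rw [key, if_true]
    rw [count_lt]
  · simp_rw [key, if_neg hik]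
    try simp

lemma inner_Ax_Bx (n : ℕ) (i k : Fin (n + 1)) (hi : 1 ≤ i.val) :
    (inner ℂ (Ax n i hi) (Bx n k) : ℂ) = if i.val < k.val then 1 else 0 := by
  rw [Ax, sum_inner]
  have key : ∀ j : Fin (n + 1),
      (inner ℂ (if h : i.val < j.val then e n i j (Or.inr ⟨hi, h⟩) else 0) (Bx n k) : ℂ)
        = if j = k then (if i.val < k.val then 1 else 0) else 0 := by
    intro j
    split
    · erw [inner_e_Bx]
      simp only [← Fin.val_eq_val]
      split_ifs <;> first | rfl | omega
    · simp only [inner_zero_left, ← Fin.val_eq_val]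
      split_ifs <;> first | rfl | omega
  simp_rw [key]
  simp

lemma inner_e00_Ax (n : ℕ) (k : Fin (n + 1)) (hk : 1 ≤ k.val) :
    (inner ℂ (e n 0 0 (Or.inl rfl)) (Ax n k hk) : ℂ) = 0 := by
  erw [inner_e_Ax]
  split_ifs with h1
  · exfalso; rcases h1 with ⟨rfl, h1b⟩; omega
  · rfl

lemma inner_e00_Bx (n : ℕ) (k : Fin (n + 1)) :
    (inner ℂ (e n 0 0 (Or.inl rfl)) (Bx n k) : ℂ) = 0 := by
  erw [inner_e_Bx]
  split_ifs with h1
  · exfalso; omega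
  · rfl

lemma inner_v_v (n : ℕ) (hn : 1 ≤ n) (i k : Fin (n + 1)) (hi : 1 ≤ i.val) (hk : 1 ≤ k.val) :
    (inner ℂ (v n i hi) (v n k hk) : ℂ) = if i = k then 1 else 0 := by
  have h00 : (inner ℂ (e n 0 0 (Or.inl rfl)) (e n 0 0 (Or.inl rfl)) : ℂ) = 1 := by
    erw [inner_e]; simp
  have hmul : ((Real.sqrt n : ℂ)) * ((Real.sqrt n : ℂ)) = (n : ℂ) := by
    norm_cast
    exact Real.mul_self_sqrt (by positivity)
  have hAe : (inner ℂ (Ax n i hi) (e n 0 0 (Or.inl rfl)) : ℂ) = 0 := by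
    rw [← inner_conj_symm, inner_e00_Ax]; simp
  have hBe : (inner ℂ (Bx n i) (e n 0 0 (Or.inl rfl)) : ℂ) = 0 := by
    rw [← inner_conj_symm, inner_e00_Bx]; simp
  have hBA : (inner ℂ (Bx n i) (Ax n k hk) : ℂ) = if k.val < i.val then 1 else 0 := by
    rw [← inner_conj_symm, inner_Ax_Bx n k i hk]
    split_ifs <;> simp
  have hconj : (starRingEnd ℂ) ((Real.sqrt n : ℂ))⁻¹ = ((Real.sqrt n : ℂ))⁻¹ := by
    rw [map_inv₀, Complex.conj_ofReal]
  rw [v_eq, v_eq, inner_smul_left, inner_smul_right, hconj]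
  simp only [inner_add_left, inner_add_right, inner_sub_left, inner_sub_right,
    h00, hAe, hBe, hBA, inner_e00_Ax, inner_e00_Bx,
    inner_Ax_Ax n i k hi hk, inner_Bx_Bx n i k, inner_Ax_Bx n i k hi]
  have hinv : ((Real.sqrt n : ℂ))⁻¹ * ((Real.sqrt n : ℂ))⁻¹ = (n : ℂ)⁻¹ := by
    rw [← mul_inv, hmul]
  have hn' : (n : ℂ) ≠ 0 := by
    exact_mod_cast Nat.cast_ne_zero.mpr (by omega)
  rcases eq_or_ne i k with rfl | hik
  · have h1 : ((n - i.val : ℕ) : ℂ) = (n : ℂ) - (i.val : ℂ) :=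
      Nat.cast_sub (by omega : i.val ≤ n)
    have h2 : ((i.val - 1 : ℕ) : ℂ) = (i.val : ℂ) - 1 := by
      rw [Nat.cast_sub hi]; simp
    rw [if_pos rfl, if_pos rfl, if_pos rfl, if_neg (lt_irrefl i.val), h1, h2, ← mul_assoc, hinv]
    field_simp
    ring
  · rw [if_neg hik, if_neg hik, if_neg hik]
    have hne : i.val ≠ k.val := fun h => hik (Fin.ext h)
    rcases lt_or_gt_of_ne hne with h | h
    · rw [if_neg (show ¬ k.val < i.val by omega), if_pos h]
      ring
    · rw [if_pos (show k.val < i.val from h), if_neg (show ¬ i.val < k.val by omega)]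
      ring

theorem stmt8 (n : ℕ) (hn : 1 ≤ n) :
    ∃ U : EuclideanSpace ℂ (BIdx n) ≃ₗᵢ[ℂ] EuclideanSpace ℂ (BIdx n),
      ∀ (i : Fin (n + 1)) (hi : 1 ≤ i.val),
        U (e n i 0 (Or.inl rfl)) = v n i hi := by
  classical
  set w : BIdx n → EuclideanSpace ℂ (BIdx n) := fun p =>
    if h : 1 ≤ (p.1.1 : Fin (n + 1)).val then v n p.1.1 h else 0 with hw_def
  set s : Set (BIdx n) := {p | 1 ≤ (p.1.1 : Fin (n + 1)).val ∧ (p.1.2 : Fin (n + 1)).val = 0}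
    with hs_def
  have hw : Orthonormal ℂ (s.restrict w) := by
    rw [orthonormal_iff_ite]
    rintro ⟨p, hp⟩ ⟨q, hq⟩
    have hp1 : 1 ≤ (p.1.1).val := hp.1
    have hq1 : 1 ≤ (q.1.1).val := hq.1
    simp only [Set.restrict, Set.domRestrict_apply, hw_def, dif_pos hp1, dif_pos hq1]
    rw [inner_v_v n hn p.1.1 q.1.1 hp1 hq1]
    congr 1
    simp only [eq_iff_iff]
    constructor
    · intro h
      apply Subtype.ext
      apply Subtype.ext
      apply Prod.ext h
      apply Fin.ext
      rw [hp.2, hq.2]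
    · intro h
      obtain rfl : p = q := congrArg Subtype.val h
      rfl
  have card : Module.finrank ℂ (EuclideanSpace ℂ (BIdx n)) = Fintype.card (BIdx n) :=
    finrank_euclideanSpace
  obtain ⟨b, hb⟩ := hw.exists_orthonormalBasis_extension_of_card_eq card
  refine ⟨b.repr.symm, fun i hi => ?_⟩
  have he : e n i 0 (Or.inl rfl)
      = EuclideanSpace.single (⟨(i, 0), Or.inl rfl⟩ : BIdx n) (1 : ℂ) := rfl
  rw [he, OrthonormalBasis.repr_symm_single]
  have hmem : (⟨(i, 0), Or.inl rfl⟩ : BIdx n) ∈ s := ⟨hi, rfl⟩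
  rw [hb _ hmem]
  simp only [hw_def, dif_pos hi]
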